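/- arXiv:2007.12575 — 2 statements merged into one kernel-verified Lean document; each statement's English description precedes it below -/
import Mathlib

section
/- For every integer k ≥ 1 and all positive definite complex d×d matrices ρ and σ with tr(ρ) = 1, the iterated mean divergence is bounded above by the geometric Rényi divergence of order α_k: D^{im}_{α_k}(ρ‖σ) ≤ (1/(α_k−1))·log tr(ρ^{1/2}(ρ^{−1/2} σ ρ^{−1/2})^{1−α_k} ρ^{1/2}). -/
open Matrix ComplexOrder

/-- `α_k = 1 + 1/(2^k - 1)`. -/
noncomputable def alphaIM (k : ℕ) : ℝ := 1 + 1 / (2 ^ k - 1)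

/-- Feasibility of `(V₁, …, V_k, Z)` for the primal SDP defining the iterated mean
divergence: `Z ≥ 0`, `V₁ + V₁* ≥ 0`, `Vᵢ* Vᵢ ≤ (Vᵢ₊₁ + Vᵢ₊₁*)/2` for `1 ≤ i ≤ k-1`, and
`V_k* V_k ≤ Z`.  The matrices are indexed by `ℕ`, with only indices `1, …, k` relevant. -/
def QimFeasible {n : Type*} [Fintype n] (k : ℕ)
    (V : ℕ → Matrix n n ℂ) (Z : Matrix n n ℂ) : Prop :=
  Z.PosSemidef ∧
  (V 1 + (V 1)ᴴ).PosSemidef ∧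
  (∀ i : ℕ, 1 ≤ i → i < k →
    ((2 : ℂ)⁻¹ • (V (i + 1) + (V (i + 1))ᴴ) - (V i)ᴴ * V i).PosSemidef) ∧
  (Z - (V k)ᴴ * V k).PosSemidef

/-- The objective `α_k · Re tr(ρ (V₁+V₁*)/2) − (α_k − 1) · Re tr(σ Z)`. -/
noncomputable def QimObj {n : Type*} [Fintype n] (k : ℕ)
    (ρ σ : Matrix n n ℂ) (V : ℕ → Matrix n n ℂ) (Z : Matrix n n ℂ) : ℝ :=
  alphaIM k * ((ρ * (V 1 + (V 1)ᴴ)).trace.re / 2) - (alphaIM k - 1) * (σ * Z).trace.re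

/-- The iterated mean quantity `Q^{im}_{α_k}(ρ‖σ)`. -/
noncomputable def Qim {n : Type*} [Fintype n] (k : ℕ) (ρ σ : Matrix n n ℂ) : ℝ :=
  sSup {q : ℝ | ∃ V Z, QimFeasible k V Z ∧ q = QimObj k ρ σ V Z}

/-- The iterated mean divergence `D^{im}_{α_k}(ρ‖σ) = (1/(α_k−1)) log Q^{im}_{α_k}(ρ‖σ)`. -/
noncomputable def Dim {n : Type*} [Fintype n] (k : ℕ) (ρ σ : Matrix n n ℂ) : ℝ :=
  (1 / (alphaIM k - 1)) * Real.log (Qim k ρ σ)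

/-- Real powers of a Hermitian matrix, via the spectral decomposition (continuous
functional calculus); junk value `0` on non-Hermitian matrices. -/
noncomputable def mrpow {n : Type*} [Fintype n] [DecidableEq n]
    (A : Matrix n n ℂ) (r : ℝ) : Matrix n n ℂ :=
  if h : A.IsHermitian then
    (h.eigenvectorUnitary : Matrix n n ℂ) *
      Matrix.diagonal (fun i => ((h.eigenvalues i ^ r : ℝ) : ℂ)) *
      (h.eigenvectorUnitary : Matrix n n ℂ)ᴴ
  else 0

/-- Matrix geometric mean `A # B = A^{1/2} (A^{-1/2} B A^{-1/2})^{1/2} A^{1/2}`. -/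
noncomputable def geomMean {n : Type*} [Fintype n] [DecidableEq n]
    (A B : Matrix n n ℂ) : Matrix n n ℂ :=
  mrpow A (1/2) * mrpow (mrpow A (-(1/2)) * B * mrpow A (-(1/2))) (1/2) * mrpow A (1/2)

/-- Partial trace over the first tensor factor. -/
noncomputable def ptrFst {α β : Type*} [Fintype α] (M : Matrix (α × β) (α × β) ℂ) :
    Matrix β β ℂ :=
  Matrix.of fun b b' => ∑ a, M (a, b) (a, b')

/-- Iterated geometric mean: `iterGeom σ A k = A₁ # (A₂ # (⋯ # (A_k # σ)⋯))`. -/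
noncomputable def iterGeom {n : Type*} [Fintype n] [DecidableEq n]
    (σ : Matrix n n ℂ) : (ℕ → Matrix n n ℂ) → ℕ → Matrix n n ℂ
  | _, 0 => σ
  | A, (j + 1) => geomMean (A 1) (iterGeom σ (fun i => A (i + 1)) j)

section Helpers

variable {n : Type*} [Fintype n] [DecidableEq n]

lemma mrpow_of_isHermitian {A : Matrix n n ℂ} (h : A.IsHermitian) (r : ℝ) :
    mrpow A r = (h.eigenvectorUnitary : Matrix n n ℂ) *
      Matrix.diagonal (fun i => ((h.eigenvalues i ^ r : ℝ) : ℂ)) *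
      (h.eigenvectorUnitary : Matrix n n ℂ)ᴴ := by
  rw [mrpow, dif_pos h]

lemma eigU_mul_star {A : Matrix n n ℂ} (h : A.IsHermitian) :
    (h.eigenvectorUnitary : Matrix n n ℂ) * (h.eigenvectorUnitary : Matrix n n ℂ)ᴴ = 1 := by
  rw [← Matrix.star_eq_conjTranspose]
  exact Matrix.mem_unitaryGroup_iff.mp h.eigenvectorUnitary.2

lemma star_mul_eigU {A : Matrix n n ℂ} (h : A.IsHermitian) :
    (h.eigenvectorUnitary : Matrix n n ℂ)ᴴ * (h.eigenvectorUnitary : Matrix n n ℂ) = 1 := by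
  rw [← Matrix.star_eq_conjTranspose]
  exact Matrix.mem_unitaryGroup_iff'.mp h.eigenvectorUnitary.2

lemma mrpow_isHermitian {A : Matrix n n ℂ} (h : A.IsHermitian) (r : ℝ) :
    (mrpow A r).IsHermitian := by
  rw [mrpow_of_isHermitian h r]
  have hd : (Matrix.diagonal (fun i => ((h.eigenvalues i ^ r : ℝ) : ℂ))).IsHermitian := by
    exact Matrix.isHermitian_diagonal_of_self_adjoint _
      (funext fun i => Complex.conj_ofReal _)
  unfold Matrix.IsHermitian
  simp only [Matrix.conjTranspose_mul, Matrix.conjTranspose_conjTranspose, hd.eq]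
  noncomm_ring

lemma mrpow_mul_mrpow {A : Matrix n n ℂ} (hA : A.PosDef) (r s : ℝ) :
    mrpow A r * mrpow A s = mrpow A (r + s) := by
  have h := hA.isHermitian
  set U : Matrix n n ℂ := (h.eigenvectorUnitary : Matrix n n ℂ) with hU
  have h1 : ∀ i, 0 < h.eigenvalues i := hA.eigenvalues_pos
  have key : (Matrix.diagonal (fun i => ((h.eigenvalues i ^ r : ℝ) : ℂ))) *
      (Matrix.diagonal (fun i => ((h.eigenvalues i ^ s : ℝ) : ℂ))) =
      Matrix.diagonal (fun i => ((h.eigenvalues i ^ (r + s) : ℝ) : ℂ)) := by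
    have funeq : (fun i => ((h.eigenvalues i ^ r : ℝ) : ℂ) * ((h.eigenvalues i ^ s : ℝ) : ℂ)) =
        (fun i => ((h.eigenvalues i ^ (r + s) : ℝ) : ℂ)) := by
      funext i
      rw [← Complex.ofReal_mul, ← Real.rpow_add (h1 i)]
    rw [Matrix.diagonal_mul_diagonal, funeq]
  rw [mrpow_of_isHermitian h r, mrpow_of_isHermitian h s, mrpow_of_isHermitian h (r + s), ← hU]
  calc U * Matrix.diagonal (fun i => ((h.eigenvalues i ^ r : ℝ) : ℂ)) * Uᴴ *
      (U * Matrix.diagonal (fun i => ((h.eigenvalues i ^ s : ℝ) : ℂ)) * Uᴴ)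
      = U * (Matrix.diagonal (fun i => ((h.eigenvalues i ^ r : ℝ) : ℂ)) * (Uᴴ * U) *
        Matrix.diagonal (fun i => ((h.eigenvalues i ^ s : ℝ) : ℂ))) * Uᴴ := by noncomm_ring
    _ = _ := by rw [hU, star_mul_eigU h, Matrix.mul_one, key]

lemma mrpow_zero {A : Matrix n n ℂ} (h : A.IsHermitian) : mrpow A 0 = 1 := by
  rw [mrpow_of_isHermitian h]
  simp [Real.rpow_zero, eigU_mul_star h]

lemma mrpow_one {A : Matrix n n ℂ} (h : A.IsHermitian) : mrpow A 1 = A := by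
  rw [mrpow_of_isHermitian h]
  simp only [Real.rpow_one]
  conv_rhs => rw [h.spectral_theorem]
  rfl

lemma posDef_conj_of_isUnit {B M : Matrix n n ℂ} (hB : B.PosDef) (hM : IsUnit M) :
    (M * B * Mᴴ).PosDef := by
  refine Matrix.PosDef.of_dotProduct_mulVec_pos ?_ ?_
  · unfold Matrix.IsHermitian
    simp only [Matrix.conjTranspose_mul, Matrix.conjTranspose_conjTranspose, hB.isHermitian.eq]
    noncomm_ring
  · intro x hx
    have hMd : IsUnit Mᴴ.det := by
      rw [Matrix.det_conjTranspose]
      exact ((Matrix.isUnit_iff_isUnit_det M).mp hM).star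
    have hy : Mᴴ *ᵥ x ≠ 0 := by
      intro hzero
      apply hx
      have : (Mᴴ)⁻¹ *ᵥ (Mᴴ *ᵥ x) = x := by
        rw [Matrix.mulVec_mulVec, Matrix.nonsing_inv_mul _ hMd, Matrix.one_mulVec]
      rw [hzero, Matrix.mulVec_zero] at this
      exact this.symm
    have key : dotProduct (star x) ((M * B * Mᴴ) *ᵥ x)
        = dotProduct (star (Mᴴ *ᵥ x)) (B *ᵥ (Mᴴ *ᵥ x)) := by
      rw [Matrix.star_mulVec, Matrix.conjTranspose_conjTranspose, ← Matrix.mulVec_mulVec,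
        ← Matrix.mulVec_mulVec, Matrix.dotProduct_mulVec (star x)]
    rw [key]
    exact hB.dotProduct_mulVec_pos hy

lemma mrpow_posDef {A : Matrix n n ℂ} (hA : A.PosDef) (r : ℝ) : (mrpow A r).PosDef := by
  have h := hA.isHermitian
  rw [mrpow_of_isHermitian h r]
  have hd : (Matrix.diagonal (fun i => ((h.eigenvalues i ^ r : ℝ) : ℂ))).PosDef := by
    rw [Matrix.posDef_diagonal_iff]
    intro i
    have := Real.rpow_pos_of_pos (hA.eigenvalues_pos i) r
    exact_mod_cast this
  have hU : IsUnit (h.eigenvectorUnitary : Matrix n n ℂ) := by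
    apply Matrix.isUnit_iff_isUnit_det _ |>.mpr
    apply IsUnit.of_mul_eq_one (h.eigenvectorUnitary : Matrix n n ℂ)ᴴ.det
    rw [← Matrix.det_mul, eigU_mul_star h, Matrix.det_one]
  exact posDef_conj_of_isUnit hd hU

lemma trace_re_nonneg_of_posSemidef {A : Matrix n n ℂ} (hA : A.PosSemidef) :
    0 ≤ A.trace.re := by
  rw [Matrix.trace]
  have : ∀ i, 0 ≤ (A.diag i).re := by
    intro i
    have := hA.dotProduct_mulVec_nonneg (Pi.single i 1)
    rw [Complex.le_def] at this
    have h2 : dotProduct (star (Pi.single i 1)) (A *ᵥ Pi.single i 1) = A i i := by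
      simp [Matrix.mulVec_single, dotProduct, Pi.single_apply, apply_ite star]
    rw [h2] at this
    exact this.1
  rw [Complex.re_sum]
  exact Finset.sum_nonneg (fun i _ => this i)

lemma trace_mul_re_nonneg {A B : Matrix n n ℂ} (hA : A.PosSemidef) (hB : B.PosSemidef) :
    0 ≤ (A * B).trace.re := by
  obtain ⟨S, rfl⟩ : ∃ S : Matrix n n ℂ, A = star S * S := by
    open scoped MatrixOrder in exact CStarAlgebra.nonneg_iff_eq_star_mul_self.mp hA.nonneg
  have h2 : (star S * S * B).trace = (S * B * Sᴴ).trace := by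
    rw [mul_assoc, Matrix.trace_mul_comm, Matrix.star_eq_conjTranspose, mul_assoc]
  rw [h2]
  exact trace_re_nonneg_of_posSemidef (hB.mul_mul_conjTranspose_same _)

lemma trace_mul_conjTranspose_re {M V : Matrix n n ℂ} (hM : M.IsHermitian) :
    (M * Vᴴ).trace.re = (M * V).trace.re := by
  have : (M * Vᴴ)ᴴ = V * M := by
    rw [Matrix.conjTranspose_mul, Matrix.conjTranspose_conjTranspose, hM.eq]
  have h2 : (V * M).trace = star (M * Vᴴ).trace := by
    rw [← this, Matrix.trace_conjTranspose]
  have h3 : (V * M).trace = (M * V).trace := Matrix.trace_mul_comm V M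
  have := congrArg Complex.re (h3.symm.trans h2)
  simpa using this.symm

lemma quad_bound {M N : Matrix n n ℂ} (hM : M.IsHermitian) (hN : N.PosDef)
    (V : Matrix n n ℂ) :
    (M * V).trace.re ≤ (V * N * Vᴴ).trace.re + (1/4) * (M * N⁻¹ * M).trace.re := by
  have hNdet : IsUnit N.det := (Matrix.isUnit_iff_isUnit_det N).mp hN.isUnit
  have hNinvH : (N⁻¹).IsHermitian := hN.isHermitian.inv
  set S : Matrix n n ℂ := V - (1/2 : ℂ) • (M * N⁻¹) with hS
  have hpsd : (S * N * Sᴴ).PosSemidef := hN.posSemidef.mul_mul_conjTranspose_same S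
  have hexp : S * N * Sᴴ = V * N * Vᴴ - (1/2 : ℂ) • (V * M) - (1/2 : ℂ) • (M * Vᴴ)
      + (1/4 : ℂ) • (M * N⁻¹ * M) := by
    have hWN : (M * N⁻¹) * N = M := by
      rw [mul_assoc, Matrix.nonsing_inv_mul _ hNdet, mul_one]
    have hNWH : N * (M * N⁻¹)ᴴ = M := by
      rw [Matrix.conjTranspose_mul, hNinvH.eq, hM.eq, ← mul_assoc,
        Matrix.mul_nonsing_inv _ hNdet, one_mul]
    have hWNWH : (M * N⁻¹) * N * (M * N⁻¹)ᴴ = M * N⁻¹ * M := by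
      rw [hWN, Matrix.conjTranspose_mul, hNinvH.eq, hM.eq, ← mul_assoc]
    rw [hS]
    simp only [Matrix.conjTranspose_sub, Matrix.conjTranspose_smul, Matrix.sub_mul,
      Matrix.mul_sub, Matrix.smul_mul, Matrix.mul_smul, smul_smul, smul_sub]
    have h0 : M * N⁻¹ * N * Vᴴ = M * Vᴴ := by rw [hWN]
    have h1 : V * N * (M * N⁻¹)ᴴ = V * M := by rw [mul_assoc, hNWH]
    rw [h0, h1, hWNWH]
    have hc : star (1/2 : ℂ) = (1/2 : ℂ) := by norm_num
    rw [hc]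
    module
  have h4 := trace_re_nonneg_of_posSemidef hpsd
  rw [hexp] at h4
  simp only [Matrix.trace_sub, Matrix.trace_add, Matrix.trace_smul, smul_eq_mul,
    Complex.add_re, Complex.sub_re, Complex.mul_re] at h4
  norm_num at h4
  have hVM : (V * M).trace.re = (M * V).trace.re := by rw [Matrix.trace_mul_comm]
  have hMVH := trace_mul_conjTranspose_re (V := V) hM
  linarith

lemma trace_smul_re (a : ℝ) (A : Matrix n n ℂ) :
    (((a : ℂ) • A).trace).re = a * A.trace.re := by
  rw [Matrix.trace_smul, smul_eq_mul, Complex.mul_re]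
  simp

lemma quad_bound' {M N : Matrix n n ℂ} (hM : M.IsHermitian) (hN : N.PosDef)
    (V : Matrix n n ℂ) {a b : ℝ} (ha : 0 ≤ a) (hb : 0 < b) :
    a * (M * V).trace.re ≤ b * (V * N * Vᴴ).trace.re
      + (a^2 / (4*b)) * (M * N⁻¹ * M).trace.re := by
  set c : ℝ := a / b with hc
  have hMc : (((c : ℂ)) • M).IsHermitian := by
    unfold Matrix.IsHermitian
    rw [Matrix.conjTranspose_smul, hM.eq]
    congr 1
    simp
  have h := quad_bound hMc hN V
  have h1 : ((c:ℂ) • M * V).trace.re = c * (M * V).trace.re := by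
    rw [Matrix.smul_mul, trace_smul_re]
  have h2 : ((c:ℂ) • M * N⁻¹ * ((c:ℂ) • M)).trace.re
      = (c * c) * (M * N⁻¹ * M).trace.re := by
    rw [Matrix.smul_mul, Matrix.smul_mul, Matrix.mul_smul, smul_smul, ← Complex.ofReal_mul,
      trace_smul_re]
  rw [h1, h2] at h
  have hb' : (0:ℝ) < 4 * b := by linarith
  have := mul_le_mul_of_nonneg_left h (le_of_lt hb)
  calc a * (M * V).trace.re = b * (c * (M * V).trace.re) := by
        rw [hc]; field_simp
    _ ≤ b * ((V * N * Vᴴ).trace.re + 1/4 * (c * c * (M * N⁻¹ * M).trace.re)) := this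
    _ = b * (V * N * Vᴴ).trace.re + (a^2/(4*b)) * (M * N⁻¹ * M).trace.re := by
        rw [hc]; field_simp

lemma link_bound {G W U : Matrix n n ℂ} (hG : G.PosSemidef)
    (h : ((2 : ℂ)⁻¹ • (W + Wᴴ) - Uᴴ * U).PosSemidef) :
    (G * (Uᴴ * U)).trace.re ≤ (G * W).trace.re := by
  have h0 := trace_mul_re_nonneg hG h
  have hexp : G * ((2 : ℂ)⁻¹ • (W + Wᴴ) - Uᴴ * U)
      = (2:ℂ)⁻¹ • (G * W) + (2:ℂ)⁻¹ • (G * Wᴴ) - G * (Uᴴ * U) := by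
    rw [Matrix.mul_sub, Matrix.mul_smul, Matrix.mul_add]
    rw [smul_add]
  rw [hexp] at h0
  have h2inv : ((2:ℂ)⁻¹) = ((2⁻¹ : ℝ) : ℂ) := by norm_num
  rw [h2inv] at h0
  simp only [Matrix.trace_sub, Matrix.trace_add, Complex.sub_re, Complex.add_re,
    Matrix.trace_smul, smul_eq_mul, Complex.mul_re, Complex.ofReal_re, Complex.ofReal_im] at h0
  have hWH := trace_mul_conjTranspose_re (V := W) hG.isHermitian
  simp only [hWH] at h0
  norm_num at h0
  linarith

lemma dotProduct_single_single (A : Matrix n n ℂ) (i : n) :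
    dotProduct (star (Pi.single i 1)) (A *ᵥ Pi.single i 1) = A i i := by
  simp [Matrix.mulVec_single, dotProduct, Pi.single_apply, apply_ite star]

lemma trace_re_pos_of_posDef [Nonempty n] {A : Matrix n n ℂ} (hA : A.PosDef) :
    0 < A.trace.re := by
  rw [Matrix.trace, Complex.re_sum]
  obtain ⟨i⟩ := (inferInstance : Nonempty n)
  have hpos : 0 < (A.diag i).re := by
    have h1 := (Complex.pos_iff.mp (hA.dotProduct_mulVec_pos (x := Pi.single i 1) (by
      intro h
      have := congrFun h i
      simp [Pi.single_apply] at this))).1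
    rw [dotProduct_single_single] at h1
    exact h1
  have hnonneg : ∀ j, 0 ≤ (A.diag j).re := by
    intro j
    have := hA.posSemidef.dotProduct_mulVec_nonneg (Pi.single j 1)
    rw [dotProduct_single_single, Complex.le_def] at this
    exact this.1
  exact Finset.sum_pos' (fun j _ => hnonneg j) ⟨i, Finset.mem_univ i, hpos⟩

lemma smul_one_posSemidef {r : ℝ} (hr : 0 ≤ r) :
    (((r : ℂ)) • (1 : Matrix n n ℂ)).PosSemidef := by
  rw [Matrix.smul_one_eq_diagonal]
  refine Matrix.PosSemidef.diagonal (fun i => ?_)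
  rw [Complex.le_def]
  simp [hr]

lemma smul_one_conjTranspose (r : ℝ) :
    (((r : ℂ)) • (1 : Matrix n n ℂ))ᴴ = ((r : ℂ)) • (1 : Matrix n n ℂ) := by
  rw [Matrix.conjTranspose_smul, Matrix.conjTranspose_one]
  congr 1
  exact Complex.conj_ofReal r

lemma trace_mul_smul_one_re (A : Matrix n n ℂ) (r : ℝ) :
    (A * (((r : ℂ)) • (1 : Matrix n n ℂ))).trace.re = r * A.trace.re := by
  rw [Matrix.mul_smul, mul_one, trace_smul_re]

end Helpers

/-- the iterated mean divergence is bounded above by the geometric Rényi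
divergence of order `α_k`. -/
theorem stmt_7 (d k : ℕ) (hk : 1 ≤ k) (ρ σ : Matrix (Fin d) (Fin d) ℂ)
    (hρ : ρ.PosDef) (hρtr : ρ.trace = 1) (hσ : σ.PosDef) :
    Dim k ρ σ ≤
      (1 / (alphaIM k - 1)) * Real.log
        ((mrpow ρ (1/2) *
          mrpow (mrpow ρ (-(1/2)) * σ * mrpow ρ (-(1/2))) (1 - alphaIM k) *
          mrpow ρ (1/2)).trace.re) := by
  classical
  -- scalar facts
  have h2k : (1:ℝ) < 2 ^ k := by
    have : (2:ℝ) ^ 0 < 2 ^ k := by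
      apply pow_lt_pow_right₀ (by norm_num) (by omega)
    simpa using this
  have h2k0 : (2:ℝ) ^ k - 1 ≠ 0 := by linarith
  set β : ℝ := 1 / ((2:ℝ) ^ k - 1) with hβdef
  have hβ : 0 < β := by
    rw [hβdef]
    exact div_pos one_pos (by linarith)
  have hα : alphaIM k = 1 + β := by rw [alphaIM, hβdef]
  have h1mα : 1 - alphaIM k = -β := by rw [hα]; ring
  rw [h1mα]
  -- matrices
  set R2 := mrpow ρ (1/2) with hR2
  set Rm := mrpow ρ (-(1/2)) with hRm
  set X := Rm * σ * Rm with hXdef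
  have hR2pd : R2.PosDef := mrpow_posDef hρ _
  have hRmpd : Rm.PosDef := mrpow_posDef hρ _
  have hXpd : X.PosDef := by
    have h : X = Rm * σ * Rmᴴ := by rw [hRmpd.isHermitian.eq]
    rw [h]
    exact posDef_conj_of_isUnit hσ hRmpd.isUnit
  have hRmR2 : Rm * R2 = 1 := by
    rw [hRm, hR2, mrpow_mul_mrpow hρ]
    norm_num [mrpow_zero hρ.isHermitian]
  have hR2Rm : R2 * Rm = 1 := by
    rw [hRm, hR2, mrpow_mul_mrpow hρ]
    norm_num [mrpow_zero hρ.isHermitian]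
  set G : ℝ → Matrix (Fin d) (Fin d) ℂ := fun u => R2 * mrpow X u * R2 with hGdef
  have hGpd : ∀ u, (G u).PosDef := by
    intro u
    have h : G u = R2 * mrpow X u * R2ᴴ := by rw [hGdef, hR2pd.isHermitian.eq]
    rw [h]
    exact posDef_conj_of_isUnit (mrpow_posDef hXpd u) hR2pd.isUnit
  have hGinv : ∀ u, (G u)⁻¹ = Rm * mrpow X (-u) * Rm := by
    intro u
    apply Matrix.inv_eq_left_inv
    calc (Rm * mrpow X (-u) * Rm) * (R2 * mrpow X u * R2)
        = Rm * (mrpow X (-u) * (Rm * R2) * mrpow X u) * R2 := by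
          show Rm * mrpow X (-u) * Rm * (R2 * mrpow X u * R2) = _
          noncomm_ring
      _ = Rm * (mrpow X (-u) * mrpow X u) * R2 := by rw [hRmR2, mul_one]
      _ = Rm * mrpow X 0 * R2 := by rw [mrpow_mul_mrpow hXpd]; norm_num
      _ = Rm * R2 := by rw [mrpow_zero hXpd.isHermitian, mul_one]
      _ = 1 := hRmR2
  have hGmul : ∀ a b, G a * (G b)⁻¹ * G a = G (2*a - b) := by
    intro a b
    rw [hGinv b]
    calc (R2 * mrpow X a * R2) * (Rm * mrpow X (-b) * Rm) * (R2 * mrpow X a * R2)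
        = R2 * (mrpow X a * (R2 * Rm) * mrpow X (-b) * (Rm * R2) * mrpow X a) * R2 := by
          noncomm_ring
      _ = R2 * (mrpow X a * mrpow X (-b) * mrpow X a) * R2 := by
          rw [hR2Rm, hRmR2, mul_one, mul_one]
      _ = R2 * mrpow X (2*a - b) * R2 := by
          rw [mrpow_mul_mrpow hXpd, mrpow_mul_mrpow hXpd]
          norm_num
          ring_nf
      _ = G (2*a - b) := rfl
  have hGzero : G 0 = ρ := by
    show R2 * mrpow X 0 * R2 = ρ
    rw [mrpow_zero hXpd.isHermitian, mul_one, hR2, mrpow_mul_mrpow hρ]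
    norm_num [mrpow_one hρ.isHermitian]
  have hGone : G 1 = σ := by
    show R2 * mrpow X 1 * R2 = σ
    rw [mrpow_one hXpd.isHermitian, hXdef]
    calc R2 * (Rm * σ * Rm) * R2 = (R2 * Rm) * σ * (Rm * R2) := by noncomm_ring
      _ = σ := by rw [hR2Rm, hRmR2, one_mul, mul_one]
  set T : ℝ := (R2 * mrpow X (-β) * R2).trace.re with hTdef
  have hTG : (G (-β)).trace.re = T := rfl
  have hT0 : 0 ≤ T := by
    rw [← hTG]
    exact trace_re_nonneg_of_posSemidef (hGpd _).posSemidef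
  -- the main bound
  have main : ∀ V Z, QimFeasible k V Z → QimObj k ρ σ V Z ≤ T := by
    intro V Z hfeas
    obtain ⟨hZ, hV1, hmid, hlast⟩ := hfeas
    set c : ℕ → ℝ := fun i => 2^(k+1) * β / 2^i with hc
    set t : ℕ → ℝ := fun i => ((2:ℝ)^i / 2 - 1) * β with ht
    have hcpos : ∀ i, 0 < c i := by
      intro i
      rw [hc]
      positivity
    have hcsucc : ∀ i : ℕ, c i = 2 * c (i+1) := by
      intro i
      rw [hc]
      simp only
      rw [pow_succ]
      field_simp
      ring
    have htkey : ∀ i : ℕ, 2 * t i - t (i+1) = -β := by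
      intro i
      rw [ht]
      simp only
      rw [pow_succ]
      ring
    have ht1 : t 1 = 0 := by rw [ht]; norm_num
    have htk1 : t (k+1) = 1 := by
      rw [ht]
      simp only
      rw [pow_succ]
      rw [hβdef]
      field_simp
    have hc1 : c 1 = alphaIM k := by
      rw [hc, hα, hβdef]
      simp only
      rw [pow_succ]
      field_simp
      ring
    have hck1 : c (k+1) = β := by
      rw [hc]
      simp only
      field_simp
    have hsand : ∀ i : ℕ, (G (t i)) * (G (t (i+1)))⁻¹ * (G (t i)) = G (-β) := by
      intro i
      rw [hGmul, htkey i]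
    have hcoef : ∀ i : ℕ, c i ^ 2 / (4 * c (i+1)) = c (i+1) := by
      intro i
      rw [hcsucc i]
      have := hcpos (i+1)
      field_simp
      ring
    have claim : ∀ m i : ℕ, 1 ≤ i → i + m = k →
        c i * ((G (t i)) * V i).trace.re ≤ (c i - β) * T + β * (σ * Z).trace.re := by
      intro m
      induction m with
      | zero =>
        intro i hi1 hik
        have hik' : i = k := by omega
        subst hik'
        have hq := quad_bound' (hGpd (t i)).isHermitian (hGpd (t (i+1))) (V i)
          (hcpos i).le (hcpos (i+1))
        rw [hsand i, hcoef i, hTG] at hq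
        have hGtk1 : G (t (i+1)) = σ := by rw [htk1, hGone]
        rw [hGtk1] at hq
        have hcyc : (V i * σ * (V i)ᴴ).trace.re = (σ * ((V i)ᴴ * V i)).trace.re := by
          rw [Matrix.trace_mul_cycle, Matrix.trace_mul_comm]
        have hlast' : (σ * ((V i)ᴴ * V i)).trace.re ≤ (σ * Z).trace.re := by
          have h0 := trace_mul_re_nonneg hσ.posSemidef hlast
          have hdist : σ * (Z - (V i)ᴴ * V i) = σ * Z - σ * ((V i)ᴴ * V i) := by
            rw [Matrix.mul_sub]
          rw [hdist, Matrix.trace_sub, Complex.sub_re] at h0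
          linarith
        rw [hcyc] at hq
        have hck : c i = 2 * β := by rw [hcsucc i, hck1]
        have h5 := mul_le_mul_of_nonneg_left hlast' (hcpos (i+1)).le
        rw [hck1] at hq h5
        have hg : c i - β = β := by rw [hck]; ring
        rw [hg]
        linarith
      | succ m ih =>
        intro i hi1 him
        have hik : i < k := by omega
        have hq := quad_bound' (hGpd (t i)).isHermitian (hGpd (t (i+1))) (V i)
          (hcpos i).le (hcpos (i+1))
        rw [hsand i, hcoef i, hTG] at hq
        have hcyc : (V i * G (t (i+1)) * (V i)ᴴ).trace.re
            = (G (t (i+1)) * ((V i)ᴴ * V i)).trace.re := by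
          rw [Matrix.trace_mul_cycle, Matrix.trace_mul_comm]
        rw [hcyc] at hq
        have hlink := link_bound (hGpd (t (i+1))).posSemidef (hmid i hi1 hik)
        have h5 := mul_le_mul_of_nonneg_left hlink (hcpos (i+1)).le
        have ihh := ih (i+1) (by omega) (by omega)
        have hg : c i - β = c (i+1) + (c (i+1) - β) := by rw [hcsucc i]; ring
        rw [hg, add_mul]
        linarith
    -- conclude the bound on the objective
    have htrace2 : (ρ * (V 1 + (V 1)ᴴ)).trace.re = 2 * (ρ * V 1).trace.re := by
      rw [Matrix.mul_add, Matrix.trace_add, Complex.add_re,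
        trace_mul_conjTranspose_re hρ.isHermitian]
      ring
    have hclaim1 := claim (k - 1) 1 le_rfl (by omega)
    rw [ht1, hGzero, hc1] at hclaim1
    rw [QimObj, htrace2]
    have hαβ : alphaIM k - 1 = β := by rw [hα]; ring
    rw [hαβ]
    have : alphaIM k - β = 1 := by rw [hα]; ring
    nlinarith [hclaim1]
  -- Qim ≤ T
  have hub : ∀ q ∈ {q : ℝ | ∃ V Z, QimFeasible k V Z ∧ q = QimObj k ρ σ V Z}, q ≤ T := by
    rintro q ⟨V, Z, hf, rfl⟩
    exact main V Z hf
  have hQle : Qim k ρ σ ≤ T := by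
    rw [Qim]
    exact Real.sSup_le hub hT0
  -- positivity of Qim
  have hd : 0 < d := by
    rcases Nat.eq_zero_or_pos d with h | h
    · subst h
      rw [Matrix.trace] at hρtr
      simp at hρtr
    · exact h
  haveI : Nonempty (Fin d) := ⟨⟨0, hd⟩⟩
  have hρre : ρ.trace.re = 1 := by rw [hρtr]; simp
  have hs : 0 < σ.trace.re := trace_re_pos_of_posDef hσ
  set s : ℝ := σ.trace.re with hsdef
  have hαpos : 0 < alphaIM k := by rw [hα]; linarith
  set τ : ℝ := min 1 (alphaIM k / (2*β*s)) with hτdef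
  have hτpos : 0 < τ := lt_min one_pos (by positivity)
  have hτ1 : τ ≤ 1 := min_le_left _ _
  have hτ2 : τ ≤ alphaIM k / (2*β*s) := min_le_right _ _
  set V0 : ℕ → Matrix (Fin d) (Fin d) ℂ := fun i => ((τ ^ (2^(i-1)) : ℝ) : ℂ) • 1 with hV0
  set Z0 : Matrix (Fin d) (Fin d) ℂ := ((τ ^ (2^k) : ℝ) : ℂ) • 1 with hZ0
  have hVsq : ∀ i : ℕ, 1 ≤ i → (V0 i)ᴴ * V0 i = ((τ ^ (2^i) : ℝ) : ℂ) • 1 := by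
    intro i hi
    rw [hV0]
    simp only
    rw [smul_one_conjTranspose, Matrix.smul_mul, Matrix.mul_smul, smul_smul, one_mul,
      ← Complex.ofReal_mul, ← pow_add]
    congr 2
    rw [← two_mul, ← pow_succ', Nat.sub_add_cancel hi]
  have hVsum : ∀ i : ℕ, V0 i + (V0 i)ᴴ = ((2 * τ ^ (2^(i-1)) : ℝ) : ℂ) • 1 := by
    intro i
    rw [hV0]
    simp only
    rw [smul_one_conjTranspose, ← add_smul, ← Complex.ofReal_add]
    norm_num
    ring_nf
  have hfeas0 : QimFeasible k V0 Z0 := by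
    refine ⟨?_, ?_, ?_, ?_⟩
    · exact smul_one_posSemidef (by positivity)
    · rw [hVsum 1]
      exact smul_one_posSemidef (by positivity)
    · intro i hi1 hik
      have he : (2 : ℂ)⁻¹ • (V0 (i+1) + (V0 (i+1))ᴴ) - (V0 i)ᴴ * V0 i = 0 := by
        rw [hVsum (i+1), hVsq i hi1]
        rw [smul_smul]
        have h2 : (i+1) - 1 = i := by omega
        rw [h2]
        rw [sub_eq_zero]
        congr 1
        push_cast
        ring
      rw [he]
      exact Matrix.PosSemidef.zero
    · have he : Z0 - (V0 k)ᴴ * V0 k = 0 := by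
        rw [hVsq k hk, hZ0, sub_self]
      rw [he]
      exact Matrix.PosSemidef.zero
  have hobj0 : QimObj k ρ σ V0 Z0 = alphaIM k * τ - β * (τ ^ (2^k) * s) := by
    rw [QimObj]
    have h1 : (ρ * (V0 1 + (V0 1)ᴴ)).trace.re = 2 * τ * ρ.trace.re := by
      rw [hVsum 1, trace_mul_smul_one_re]
      norm_num
    have h2 : (σ * Z0).trace.re = τ ^ (2^k) * s := by
      rw [hZ0, trace_mul_smul_one_re, hsdef]
    rw [h1, h2, hρre, hα]
    ring
  have hobjpos : 0 < QimObj k ρ σ V0 Z0 := by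
    rw [hobj0]
    have hpow : τ ^ (2^k) ≤ τ ^ 2 := by
      apply pow_le_pow_of_le_one hτpos.le hτ1
      calc 2 = 2^1 := (pow_one 2).symm
        _ ≤ 2^k := Nat.pow_le_pow_right (by norm_num) hk
    have h1 : β * (τ ^ (2^k) * s) ≤ β * (τ * τ * s) := by
      apply mul_le_mul_of_nonneg_left _ hβ.le
      apply mul_le_mul_of_nonneg_right _ hs.le
      calc τ ^ (2^k) ≤ τ ^ 2 := hpow
        _ = τ * τ := sq τ
    have h2 : τ * (2*β*s) ≤ alphaIM k := by
      rw [← le_div_iff₀ (by positivity)] at *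
      exact hτ2
    nlinarith
  have hQpos : 0 < Qim k ρ σ := by
    have hmem : QimObj k ρ σ V0 Z0 ∈
        {q : ℝ | ∃ V Z, QimFeasible k V Z ∧ q = QimObj k ρ σ V Z} :=
      ⟨V0, Z0, hfeas0, rfl⟩
    have hbdd : BddAbove {q : ℝ | ∃ V Z, QimFeasible k V Z ∧ q = QimObj k ρ σ V Z} :=
      ⟨T, hub⟩
    calc (0:ℝ) < QimObj k ρ σ V0 Z0 := hobjpos
      _ ≤ Qim k ρ σ := le_csSup hbdd hmem
  -- final
  rw [Dim]
  have hαβ : alphaIM k - 1 = β := by rw [hα]; ring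
  rw [hαβ]
  apply mul_le_mul_of_nonneg_left _ (by positivity)
  exact Real.log_le_log hQpos hQle
end

section
/- Let ρ be a density matrix on ℂ^{d_A}⊗ℂ^{d_B}. Then the optimized iterated mean conditional entropy of order 2 dominates the conditional min-entropy: −2·log( sup { Re tr(ρ·(V+V*)/2) : V a complex matrix on ℂ^{d_A}⊗ℂ^{d_B}, V + V* ≥ 0, Tr_A(V* V) ≤ I_B } ) ≥ −log( sup { Re tr(ρ·M) : M positive semidefinite on ℂ^{d_A}⊗ℂ^{d_B}, Tr_A(M) ≤ I_B } ). -/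
open Matrix ComplexOrder

namespace Matrix.PosSemidef

variable {n : Type*} [Fintype n] [DecidableEq n] {A : Matrix n n ℂ}

/-- Square root of a positive semidefinite matrix via the spectral decomposition. -/
noncomputable def sqrt (hA : A.PosSemidef) : Matrix n n ℂ :=
  (hA.1.eigenvectorUnitary : Matrix n n ℂ) *
    Matrix.diagonal (fun i => ((Real.sqrt (hA.1.eigenvalues i) : ℝ) : ℂ)) *
    (hA.1.eigenvectorUnitary : Matrix n n ℂ)ᴴ

lemma posSemidef_sqrt (hA : A.PosSemidef) : hA.sqrt.PosSemidef := by
  unfold sqrt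
  refine (Matrix.posSemidef_diagonal_iff.mpr fun i => ?_).mul_mul_conjTranspose_same _
  rw [← Complex.ofReal_zero, Complex.real_le_real]
  exact Real.sqrt_nonneg _

lemma sqrt_mul_self (hA : A.PosSemidef) : hA.sqrt * hA.sqrt = A := by
  set U : Matrix n n ℂ := (hA.1.eigenvectorUnitary : Matrix n n ℂ) with hUdef
  have hUU' : Uᴴ * U = 1 := by
    simpa [Matrix.star_eq_conjTranspose] using
      Matrix.mem_unitaryGroup_iff'.mp hA.1.eigenvectorUnitary.2
  set D : Matrix n n ℂ :=
    Matrix.diagonal (fun i => ((Real.sqrt (hA.1.eigenvalues i) : ℝ) : ℂ)) with hDdef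
  have hd : D * D = Matrix.diagonal (fun i => (hA.1.eigenvalues i : ℂ)) := by
    rw [hDdef, Matrix.diagonal_mul_diagonal]
    congr 1
    funext i
    rw [← Complex.ofReal_mul, Real.mul_self_sqrt (hA.eigenvalues_nonneg i)]
  have h1 : hA.sqrt * hA.sqrt = U * (D * (Uᴴ * U) * D) * Uᴴ := by
    simp only [sqrt, hUdef, hDdef, Matrix.mul_assoc]
  rw [h1, hUU', Matrix.mul_one, hd]
  conv_rhs => rw [hA.1.spectral_theorem]
  simp [Function.comp_def, Matrix.star_eq_conjTranspose, hUdef, Matrix.mul_assoc]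

end Matrix.PosSemidef

section Aux

variable {n : Type*} [Fintype n]

/-- The trace of `Cᴴ * D` as a sum over entries. -/
lemma aux_trace_eq_sum (C D : Matrix n n ℂ) :
    (Cᴴ * D).trace = ∑ p : n × n, (starRingEnd ℂ) (C p.2 p.1) * D p.2 p.1 := by
  rw [Matrix.trace, Fintype.sum_prod_type]
  simp [Matrix.diag, Matrix.mul_apply, Matrix.conjTranspose_apply]

lemma aux_trace_sq (C : Matrix n n ℂ) :
    (Cᴴ * C).trace.re = ∑ p : n × n, ‖C p.2 p.1‖ ^ 2 := by
  rw [aux_trace_eq_sum, Complex.re_sum]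
  refine Finset.sum_congr rfl fun p _ => ?_
  rw [Complex.conj_mul']
  norm_cast

/-- Cauchy–Schwarz for the trace inner product. -/
lemma aux_cs (A B : Matrix n n ℂ) :
    ‖(Aᴴ * B).trace‖ ≤ Real.sqrt (Aᴴ * A).trace.re * Real.sqrt (Bᴴ * B).trace.re := by
  classical
  let x : EuclideanSpace ℂ (n × n) := WithLp.toLp 2 (fun p : n × n => A p.2 p.1)
  let y : EuclideanSpace ℂ (n × n) := WithLp.toLp 2 (fun p : n × n => B p.2 p.1)
  have hxy : (Aᴴ * B).trace = inner ℂ x y := by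
    rw [aux_trace_eq_sum]
    simp only [x, y, PiLp.inner_apply, PiLp.toLp_apply, RCLike.inner_apply, mul_comm]
  have hx : Real.sqrt (Aᴴ * A).trace.re = ‖x‖ := by
    rw [aux_trace_sq, EuclideanSpace.norm_eq]
  have hy : Real.sqrt (Bᴴ * B).trace.re = ‖y‖ := by
    rw [aux_trace_sq, EuclideanSpace.norm_eq]
  rw [hxy, hx, hy]
  exact norm_inner_le_norm x y

lemma aux_trace_re_nonneg [DecidableEq n] {A : Matrix n n ℂ} (hA : A.PosSemidef) :
    0 ≤ A.trace.re := by
  have h : A = hA.sqrtᴴ * hA.sqrt := by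
    rw [hA.posSemidef_sqrt.1, hA.sqrt_mul_self]
  rw [h, aux_trace_sq]
  positivity

lemma aux_mul_trace_re_nonneg [DecidableEq n] {A B : Matrix n n ℂ}
    (hA : A.PosSemidef) (hB : B.PosSemidef) : 0 ≤ (A * B).trace.re := by
  have h1 : (A * B).trace = (hA.sqrtᴴ * B * hA.sqrt).trace := by
    rw [Matrix.trace_mul_cycle, hA.posSemidef_sqrt.1, hA.sqrt_mul_self]
  rw [h1]
  exact aux_trace_re_nonneg (hB.conjTranspose_mul_mul_same hA.sqrt)

lemma aux_one_sub_psd [DecidableEq n] {ρ : Matrix n n ℂ} (hρ : ρ.PosSemidef)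
    (htr : ρ.trace = 1) : ((1 : Matrix n n ℂ) - ρ).PosSemidef := by
  have h := hρ.1
  set U : Matrix n n ℂ := (h.eigenvectorUnitary : Matrix n n ℂ) with hUdef
  have hUU : U * Uᴴ = 1 := by
    simpa [Matrix.star_eq_conjTranspose] using
      Matrix.mem_unitaryGroup_iff.mp h.eigenvectorUnitary.2
  have hspec : ρ = U * Matrix.diagonal (fun i => (h.eigenvalues i : ℂ)) * Uᴴ := by
    have := h.spectral_theorem
    simpa [Function.comp_def, Matrix.star_eq_conjTranspose, hUdef] using this
  have htrsum : (∑ i, (h.eigenvalues i : ℂ)) = 1 := by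
    have hUU' : Uᴴ * U = 1 := by
      simpa [Matrix.star_eq_conjTranspose] using
        Matrix.mem_unitaryGroup_iff'.mp h.eigenvectorUnitary.2
    have h1 := congrArg Matrix.trace hspec
    rw [Matrix.trace_mul_cycle, hUU', one_mul, htr, Matrix.trace_diagonal] at h1
    exact h1.symm
  have hsum : (∑ i, h.eigenvalues i) = 1 := by
    have := htrsum
    push_cast at this
    exact_mod_cast this
  have hle : ∀ i, h.eigenvalues i ≤ 1 := by
    intro i
    rw [← hsum]
    exact Finset.single_le_sum (fun j _ => hρ.eigenvalues_nonneg j) (Finset.mem_univ i)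
  have hkey : (1 : Matrix n n ℂ) - ρ
      = U * Matrix.diagonal (fun i => ((1 - h.eigenvalues i : ℝ) : ℂ)) * Uᴴ := by
    have hd : Matrix.diagonal (fun i => ((1 - h.eigenvalues i : ℝ) : ℂ))
        = 1 - Matrix.diagonal (fun i => (h.eigenvalues i : ℂ)) := by
      ext i j
      by_cases hij : i = j
      · subst hij
        simp [Matrix.sub_apply, Matrix.one_apply, Complex.ofReal_sub]
      · simp [Matrix.sub_apply, Matrix.one_apply, Matrix.diagonal_apply_ne _ hij, hij]
    rw [hd, Matrix.mul_sub, Matrix.sub_mul, mul_one, hUU, ← hspec]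
  rw [hkey]
  refine (Matrix.posSemidef_diagonal_iff.mpr fun i => ?_).mul_mul_conjTranspose_same U
  rw [← Complex.ofReal_zero, Complex.real_le_real]
  linarith [hle i]

lemma aux_ptr_trace {α β : Type*} [Fintype α] [Fintype β]
    (M : Matrix (α × β) (α × β) ℂ) : (ptrFst M).trace = M.trace := by
  rw [Matrix.trace, Matrix.trace, Fintype.sum_prod_type]
  rw [Finset.sum_comm]
  simp [ptrFst, Matrix.diag]

end Aux

/-- the optimized iterated mean conditional entropy of order 2 dominates the
conditional min-entropy. -/
theorem stmt_13 (dA dB : ℕ)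
    (ρ : Matrix (Fin dA × Fin dB) (Fin dA × Fin dB) ℂ)
    (hρ : ρ.PosSemidef) (hρtr : ρ.trace = 1) :
    (-2 : ℝ) * Real.log
        (sSup {r : ℝ | ∃ V : Matrix (Fin dA × Fin dB) (Fin dA × Fin dB) ℂ,
          (V + Vᴴ).PosSemidef ∧
          ((1 : Matrix (Fin dB) (Fin dB) ℂ) - ptrFst (Vᴴ * V)).PosSemidef ∧
          r = (ρ * (V + Vᴴ)).trace.re / 2}) ≥
      -Real.log
        (sSup {r : ℝ | ∃ M : Matrix (Fin dA × Fin dB) (Fin dA × Fin dB) ℂ,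
          M.PosSemidef ∧
          ((1 : Matrix (Fin dB) (Fin dB) ℂ) - ptrFst M).PosSemidef ∧
          r = (ρ * M).trace.re}) := by
  classical
  -- the index type is nonempty
  have hne : Nonempty (Fin dA × Fin dB) := by
    by_contra hempty
    rw [not_nonempty_iff] at hempty
    have h0 : ρ.trace = 0 := by simp [Matrix.trace]
    rw [hρtr] at h0
    exact one_ne_zero h0
  have hdA : 0 < dA := hne.some.1.pos
  set SL : Set ℝ := {r : ℝ | ∃ V : Matrix (Fin dA × Fin dB) (Fin dA × Fin dB) ℂ,
          (V + Vᴴ).PosSemidef ∧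
          ((1 : Matrix (Fin dB) (Fin dB) ℂ) - ptrFst (Vᴴ * V)).PosSemidef ∧
          r = (ρ * (V + Vᴴ)).trace.re / 2} with hSLdef
  set SR : Set ℝ := {r : ℝ | ∃ M : Matrix (Fin dA × Fin dB) (Fin dA × Fin dB) ℂ,
          M.PosSemidef ∧
          ((1 : Matrix (Fin dB) (Fin dB) ℂ) - ptrFst M).PosSemidef ∧
          r = (ρ * M).trace.re} with hSRdef
  set b : ℝ := sSup SR with hbdef
  set a : ℝ := sSup SL with hadef
  -- SR is bounded above by dB
  have hSRbound : ∀ r ∈ SR, r ≤ (dB : ℝ) := by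
    rintro r ⟨M, hM, hPt, rfl⟩
    have h2 : 0 ≤ (((1 : Matrix (Fin dA × Fin dB) (Fin dA × Fin dB) ℂ) - ρ) * M).trace.re :=
      aux_mul_trace_re_nonneg (aux_one_sub_psd hρ hρtr) hM
    have h3 : (((1 : Matrix (Fin dA × Fin dB) (Fin dA × Fin dB) ℂ) - ρ) * M).trace
        = M.trace - (ρ * M).trace := by
      rw [Matrix.sub_mul, Matrix.one_mul, Matrix.trace_sub]
    rw [h3, Complex.sub_re] at h2
    have h5 : 0 ≤ ((1 : Matrix (Fin dB) (Fin dB) ℂ) - ptrFst M).trace.re :=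
      aux_trace_re_nonneg hPt
    have h6 : ((1 : Matrix (Fin dB) (Fin dB) ℂ) - ptrFst M).trace
        = (dB : ℂ) - (ptrFst M).trace := by
      rw [Matrix.trace_sub, Matrix.trace_one]
      simp
    rw [h6, Complex.sub_re] at h5
    have h7 : (ptrFst M).trace.re = M.trace.re := congrArg Complex.re (aux_ptr_trace M)
    simp only [Complex.natCast_re] at h5
    linarith
  have hSRbdd : BddAbove SR := ⟨(dB : ℝ), fun r hr => hSRbound r hr⟩
  -- key inequality : every element of SL is at most √b
  have hkey : ∀ r ∈ SL, r ≤ Real.sqrt b := by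
    rintro r ⟨V, _, hV2, rfl⟩
    have hs := hρ.posSemidef_sqrt
    have hsH : hρ.sqrtᴴ = hρ.sqrt := hs.1
    have hss : hρ.sqrt * hρ.sqrt = ρ := hρ.sqrt_mul_self
    have step1 : (ρ * (V + Vᴴ)).trace.re / 2 = (ρ * V).trace.re := by
      have e0 : ρ * Vᴴ = (V * ρ)ᴴ := by
        rw [Matrix.conjTranspose_mul, hρ.1.eq]
      have e1 : (ρ * Vᴴ).trace = star ((ρ * V).trace) := by
        rw [e0, Matrix.trace_conjTranspose, Matrix.trace_mul_comm]
      rw [Matrix.mul_add, Matrix.trace_add, Complex.add_re, e1]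
      simp only [Complex.star_def, Complex.conj_re]
      ring
    have step2 : (hρ.sqrtᴴ * (V * hρ.sqrt)).trace = (ρ * V).trace := by
      rw [hsH, ← Matrix.mul_assoc, Matrix.trace_mul_cycle, hss]
    have step3 : ((V * hρ.sqrt)ᴴ * (V * hρ.sqrt)).trace = (ρ * (Vᴴ * V)).trace := by
      rw [Matrix.conjTranspose_mul, hsH,
        show (hρ.sqrt * Vᴴ) * (V * hρ.sqrt) = hρ.sqrt * (Vᴴ * V) * hρ.sqrt by
          simp only [Matrix.mul_assoc],
        Matrix.trace_mul_cycle, hss]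
    have hmem : (ρ * (Vᴴ * V)).trace.re ∈ SR :=
      ⟨Vᴴ * V, Matrix.posSemidef_conjTranspose_mul_self V, hV2, rfl⟩
    have hleb : (ρ * (Vᴴ * V)).trace.re ≤ b := le_csSup hSRbdd hmem
    have hcs := aux_cs hρ.sqrt (V * hρ.sqrt)
    have htr1 : (hρ.sqrtᴴ * hρ.sqrt).trace = 1 := by rw [hsH, hss, hρtr]
    rw [step2, step3, htr1] at hcs
    simp only [Complex.one_re, Real.sqrt_one, one_mul] at hcs
    calc (ρ * (V + Vᴴ)).trace.re / 2 = (ρ * V).trace.re := step1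
      _ ≤ ‖(ρ * V).trace‖ := Complex.re_le_norm _
      _ ≤ Real.sqrt ((ρ * (Vᴴ * V)).trace.re) := hcs
      _ ≤ Real.sqrt b := Real.sqrt_le_sqrt hleb
  -- the positive element of SL
  set c : ℝ := (Real.sqrt dA)⁻¹ with hcdef
  have hc : 0 < c := by
    rw [hcdef]
    exact inv_pos.mpr (Real.sqrt_pos.mpr (by exact_mod_cast hdA))
  have hptr : ∀ z : ℂ, ptrFst (z • (1 : Matrix (Fin dA × Fin dB) (Fin dA × Fin dB) ℂ))
      = (z * dA) • (1 : Matrix (Fin dB) (Fin dB) ℂ) := by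
    intro z
    ext x y
    by_cases hxy : x = y
    · subst hxy
      simp [ptrFst, Matrix.one_apply, Finset.sum_const, mul_comm]
    · simp [ptrFst, Matrix.one_apply, Prod.ext_iff, hxy]
  have hcc : ((c : ℂ) * c) * (dA : ℂ) = 1 := by
    have : (c * c) * (dA : ℝ) = 1 := by
      rw [hcdef, ← mul_inv]
      rw [Real.mul_self_sqrt (by positivity)]
      field_simp
    exact_mod_cast this
  have hcmem : c ∈ SL := by
    refine ⟨(c : ℂ) • (1 : Matrix (Fin dA × Fin dB) (Fin dA × Fin dB) ℂ), ?_, ?_, ?_⟩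
    · have hconj : ((c : ℂ) • (1 : Matrix (Fin dA × Fin dB) (Fin dA × Fin dB) ℂ))ᴴ
          = (c : ℂ) • 1 := by
        rw [Matrix.conjTranspose_smul, Matrix.conjTranspose_one]
        simp
      rw [hconj, ← add_smul, Matrix.smul_one_eq_diagonal]
      refine Matrix.posSemidef_diagonal_iff.mpr fun i => ?_
      have : ((c : ℂ) + c) = ((2 * c : ℝ) : ℂ) := by push_cast; ring
      rw [this]
      exact_mod_cast (by positivity : (0:ℝ) ≤ 2 * c)
    · have hVV : ((c : ℂ) • (1 : Matrix (Fin dA × Fin dB) (Fin dA × Fin dB) ℂ))ᴴ *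
          ((c : ℂ) • 1) = ((c : ℂ) * c) • 1 := by
        rw [Matrix.conjTranspose_smul, Matrix.conjTranspose_one, smul_mul_smul_comm,
          Matrix.one_mul]
        rw [Complex.star_def, Complex.conj_ofReal]
      rw [hVV, hptr, hcc, one_smul, sub_self]
      exact Matrix.PosSemidef.zero
    · have hconj : ((c : ℂ) • (1 : Matrix (Fin dA × Fin dB) (Fin dA × Fin dB) ℂ))ᴴ
          = (c : ℂ) • 1 := by
        rw [Matrix.conjTranspose_smul, Matrix.conjTranspose_one]
        simp
      rw [hconj, ← add_smul, Matrix.mul_smul, Matrix.mul_one, Matrix.trace_smul, hρtr]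
      simp only [smul_eq_mul, mul_one, Complex.add_re, Complex.ofReal_re]
      ring
  have hSLbdd : BddAbove SL := ⟨Real.sqrt b, fun r hr => hkey r hr⟩
  have hca : c ≤ a := le_csSup hSLbdd hcmem
  have hab : a ≤ Real.sqrt b := csSup_le ⟨c, hcmem⟩ hkey
  have hapos : 0 < a := lt_of_lt_of_le hc hca
  have hbpos : 0 < b := Real.sqrt_pos.mp (lt_of_lt_of_le hapos hab)
  have hasq : a ^ 2 ≤ b := by
    have h := pow_le_pow_left₀ hapos.le hab 2
    rwa [Real.sq_sqrt hbpos.le] at h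
  have hlog : Real.log (a ^ 2) ≤ Real.log b :=
    Real.log_le_log (pow_pos hapos 2) hasq
  rw [Real.log_pow] at hlog
  push_cast at hlog
  linarith
end
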